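/- For every unitary complex symmetric matrix K ∈ M_n(ℂ) (i.e. K unitary with K^T = K), there exists a unitary W ∈ M_n(ℂ) such that K = W W^T. -/

import Mathlib

open Matrix Polynomial

open scoped Matrix.Norms.L2Operator

noncomputable local instance matCStar (n : ℕ) : CStarAlgebra (Matrix (Fin n) (Fin n) ℂ) := {}

private lemma aeval_transpose' {n : ℕ} (K : Matrix (Fin n) (Fin n) ℂ) (p : ℂ[X]) :
    (aeval K p)ᵀ = aeval Kᵀ p := by
  induction p using Polynomial.induction_on with
  | C r =>
    simp only [aeval_C, Matrix.algebraMap_eq_diagonal, Matrix.diagonal_transpose]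
  | add p q hp hq => simp [hp, hq]
  | monomial m r h =>
    simp only [_root_.map_mul, map_pow, aeval_C, aeval_X, Matrix.transpose_mul,
      Matrix.transpose_pow, Matrix.algebraMap_eq_diagonal, Matrix.diagonal_transpose]
    rw [← Matrix.algebraMap_eq_diagonal, Algebra.commutes]

/-- every unitary complex symmetric matrix K can be written K = W Wᵀ
with W unitary. -/
theorem stmt_1 (n : ℕ) (K : Matrix (Fin n) (Fin n) ℂ)
    (hK : K ∈ Matrix.unitaryGroup (Fin n) ℂ) (hsym : Kᵀ = K) :
    ∃ W ∈ Matrix.unitaryGroup (Fin n) ℂ, K = W * Wᵀ := by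
  have hK1 : star K * K = 1 := hK.1
  have hK2 : K * star K = 1 := hK.2
  have hnormal : IsStarNormal K := ⟨by rw [Commute, SemiconjBy, hK1, hK2]⟩
  have hfin : (spectrum ℂ K).Finite := Matrix.finite_spectrum K
  have hsphere : ∀ z ∈ spectrum ℂ K, ‖z‖ = 1 := by
    intro z hz
    have := spectrum.subset_circle_of_unitary hK hz
    simpa [Complex.dist_eq] using this
  have hz0 : ∀ z ∈ spectrum ℂ K, z ≠ 0 := by
    intro z hz h0
    have := hsphere z hz
    simp [h0] at this
  set f : ℂ → ℂ := fun z => z ^ ((2 : ℂ)⁻¹) with hf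
  have hff : ∀ z ∈ spectrum ℂ K, f z * f z = z := by
    intro z hz
    rw [hf]
    rw [← Complex.cpow_add _ _ (hz0 z hz)]
    norm_num
  have habsf : ∀ z ∈ spectrum ℂ K, ‖f z‖ = 1 := by
    intro z hz
    rw [hf]
    rw [Complex.norm_cpow_of_ne_zero (hz0 z hz)]
    simp [hsphere z hz]
  set p : ℂ[X] := Lagrange.interpolate hfin.toFinset id f with hpdef
  have hp : (spectrum ℂ K).EqOn p.eval f := by
    intro z hz
    have hmem : z ∈ hfin.toFinset := hfin.mem_toFinset.2 hz
    simpa [hpdef] using Lagrange.eval_interpolate_at_node (v := id) (r := f)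
      (Set.injOn_id _) hmem
  set W : Matrix (Fin n) (Fin n) ℂ := aeval K p with hWdef
  have hWcfc : W = cfc f K := by
    rw [hWdef, ← cfc_polynomial p K]
    exact cfc_congr hp
  have hcont : ∀ g : ℂ → ℂ, ContinuousOn g (spectrum ℂ K) := fun g => hfin.continuousOn _
  have hW2 : W * W = K := by
    rw [hWcfc, ← cfc_mul f f K (hcont f) (hcont f)]
    rw [cfc_congr (g := id) hff, cfc_id ℂ K]
  have hWT : Wᵀ = W := by rw [hWdef, aeval_transpose' K p, hsym]
  have hstarW : star W = cfc (fun z => starRingEnd ℂ (f z)) K := by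
    rw [hWcfc, ← cfc_star]
    rfl
  have hmodf : ∀ z ∈ spectrum ℂ K, starRingEnd ℂ (f z) * f z = 1 := by
    intro z hz
    have h1 := habsf z hz
    rw [mul_comm, Complex.mul_conj, Complex.normSq_eq_norm_sq, h1]
    norm_num
  have hsW : star W * W = 1 := by
    rw [hstarW, hWcfc,
      ← cfc_mul (fun z => starRingEnd ℂ (f z)) f K (hcont _) (hcont _)]
    rw [cfc_congr (g := fun _ => 1) hmodf, cfc_const_one ℂ K]
  have hWs : W * star W = 1 := by
    rw [hstarW, hWcfc,
      ← cfc_mul f (fun z => starRingEnd ℂ (f z)) K (hcont _) (hcont _)]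
    have : (spectrum ℂ K).EqOn (fun z => f z * starRingEnd ℂ (f z)) (fun _ => 1) := by
      intro z hz
      have := hmodf z hz
      simpa [mul_comm] using this
    rw [cfc_congr this, cfc_const_one ℂ K]
  exact ⟨W, ⟨hsW, hWs⟩, by rw [hWT, hW2]⟩
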